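/- arXiv:1603.03393 — 3 statements merged into one kernel-verified Lean document; each statement's English description precedes it below -/
import Mathlib

section
/- For m ≠ 1 with 0 < m ≤ 2, the m-mean θ_m(s,t) = ((m−1)/m)·(s^m − t^m)/(s^(m−1) − t^(m−1)) for s ≠ t admits the integral representation θ_m(s,t) = ∫₀¹ ((1−α)s^(m−1) + α t^(m−1))^(1/(m−1)) dα for all s, t > 0. -/
/-- The `m`-mean for `m ≠ 1`, extended by continuity to the diagonal. -/
noncomputable def thetam (m s t : ℝ) : ℝ :=
  if s = t then s
  else ((m - 1) / m) * (s ^ m - t ^ m) / (s ^ (m - 1) - t ^ (m - 1))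

/-- Integral representation of the `m`-mean for `m ∈ (0,2]`, `m ≠ 1`:
`θ_m(s,t) = ∫₀¹ ((1−α)s^(m−1) + α t^(m−1))^(1/(m−1)) dα` for all `s, t > 0`. -/
theorem thetam_integral_repr (m s t : ℝ) (hm0 : 0 < m) (hm2 : m ≤ 2) (hm1 : m ≠ 1)
    (hs : 0 < s) (ht : 0 < t) :
    thetam m s t
      = ∫ α in (0:ℝ)..1, ((1 - α) * s ^ (m - 1) + α * t ^ (m - 1)) ^ (1 / (m - 1)) := by
  have h1 : m - 1 ≠ 0 := sub_ne_zero.mpr hm1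
  have hm0' : m ≠ 0 := ne_of_gt hm0
  set a := s ^ (m - 1) with ha_def
  set b := t ^ (m - 1) with hb_def
  have ha : 0 < a := Real.rpow_pos_of_pos hs _
  have hb : 0 < b := Real.rpow_pos_of_pos ht _
  set p : ℝ := 1 / (m - 1) with hp_def
  have hp1 : p + 1 = m / (m - 1) := by
    simp only [hp_def]; field_simp; ring
  have hp1ne : p + 1 ≠ 0 := by
    rw [hp1]; exact div_ne_zero hm0' h1
  set g : ℝ → ℝ := fun α => (1 - α) * a + α * b with hg_def
  have hgpos : ∀ α ∈ Set.uIcc (0:ℝ) 1, 0 < g α := by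
    intro α hα
    rw [Set.uIcc_of_le zero_le_one] at hα
    obtain ⟨h0, h1'⟩ := hα
    rcases lt_or_ge α 1 with h | h
    · have : 0 < (1 - α) * a := mul_pos (by linarith) ha
      have : 0 ≤ α * b := mul_nonneg h0 hb.le
      simp only [hg_def]; nlinarith
    · have hα1 : α = 1 := le_antisymm h1' h
      simp [hg_def, hα1, hb]
  have hgderiv : ∀ α : ℝ, HasDerivAt g (b - a) α := by
    intro α
    have h := ((hasDerivAt_id α).const_mul (b - a)).const_add a
    have heq : (fun α : ℝ => a + (b - a) * α) = g := by
      funext x; simp only [hg_def]; ring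
    simpa [heq] using h
  rcases eq_or_ne s t with hst | hst
  · subst hst
    simp only [thetam, if_pos rfl]
    have hc : ∀ α : ℝ, (1 - α) * s ^ (m - 1) + α * s ^ (m - 1) = s ^ (m - 1) := by
      intro α; ring
    simp only [ha_def, hb_def, hc]
    rw [intervalIntegral.integral_const]
    rw [← Real.rpow_mul hs.le, mul_one_div_cancel h1, Real.rpow_one]
    simp
  · have hab : a ≠ b := by
      intro h
      apply hst
      have := congrArg (· ^ (1 / (m - 1))) h
      simp only [ha_def, hb_def] at this
      rwa [← Real.rpow_mul hs.le, ← Real.rpow_mul ht.le, mul_one_div_cancel h1,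
        Real.rpow_one, Real.rpow_one] at this
    have hba : b - a ≠ 0 := sub_ne_zero.mpr (Ne.symm hab)
    set F : ℝ → ℝ := fun α => g α ^ (p + 1) / ((p + 1) * (b - a)) with hF_def
    have hFderiv : ∀ α ∈ Set.uIcc (0:ℝ) 1, HasDerivAt F (g α ^ p) α := by
      intro α hα
      have hgα := hgpos α hα
      have h := ((hgderiv α).rpow_const (p := p + 1) (Or.inl hgα.ne')).div_const ((p + 1) * (b - a))
      have : (b - a) * (p + 1) * g α ^ (p + 1 - 1) / ((p + 1) * (b - a)) = g α ^ p := by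
        rw [add_sub_cancel_right]
        field_simp
      rwa [this] at h
    have hint : IntervalIntegrable (fun α => g α ^ p) MeasureTheory.volume 0 1 := by
      apply ContinuousOn.intervalIntegrable
      apply ContinuousOn.rpow_const
      · apply Continuous.continuousOn
        simp only [hg_def]; continuity
      · intro x hx; exact Or.inl (hgpos x hx).ne'
    have key := intervalIntegral.integral_eq_sub_of_hasDerivAt hFderiv hint
    have hgi : (fun α : ℝ => ((1 - α) * a + α * b) ^ p) = fun α => g α ^ p := rfl
    rw [show (∫ α in (0:ℝ)..1, ((1 - α) * s ^ (m - 1) + α * t ^ (m - 1)) ^ (1 / (m - 1)))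
        = ∫ α in (0:ℝ)..1, g α ^ p from rfl, key]
    have hg1 : g 1 = b := by simp [hg_def]
    have hg0 : g 0 = a := by simp [hg_def]
    rw [hF_def]
    simp only [hg1, hg0]
    have hbp : b ^ (p + 1) = t ^ m := by
      rw [hb_def, hp1, ← Real.rpow_mul ht.le]
      congr 1
      field_simp
    have hap : a ^ (p + 1) = s ^ m := by
      rw [ha_def, hp1, ← Real.rpow_mul hs.le]
      congr 1
      field_simp
    rw [hbp, hap, hp1]
    rw [thetam, if_neg hst]
    have hd : s ^ (m - 1) - t ^ (m - 1) ≠ 0 := sub_ne_zero.mpr (fun h => hab (by rw [ha_def, hb_def, h]))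
    field_simp
    ring
end

section
/- For 0 < m ≤ 2, the m-mean θ_m is concave on [0,∞)². -/
open Real Set MeasureTheory

/-- The `m`-mean `θ_m : [0,∞)² → [0,∞)`, defined by
`θ_m(s,t) = (s−t)/(log s − log t)` if `m = 1` and
`θ_m(s,t) = ((m−1)/m)(s^m − t^m)/(s^(m−1) − t^(m−1))` if `m ≠ 1` for `s ≠ t`,
extended by continuity to the diagonal and to the boundary of `[0,∞)²`. -/
noncomputable def theta (m s t : ℝ) : ℝ :=
  if s = t then s
  else if s = 0 ∨ t = 0 then (if 1 < m then ((m - 1) / m) * (s + t) else 0)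
  else if m = 1 then (s - t) / (Real.log s - Real.log t)
  else ((m - 1) / m) * (s ^ m - t ^ m) / (s ^ (m - 1) - t ^ (m - 1))


/-- 1D concavity of t ↦ (u + v t^r)^(1/r) on (0,∞) for r ≤ 1, r ≠ 0. -/
lemma aux_oneD {u v r : ℝ} (hu : 0 < u) (hv : 0 < v) (hr1 : r ≤ 1) (hr0 : r ≠ 0) :
    ConcaveOn ℝ (Ioi (0:ℝ)) (fun t => (u + v * t ^ r) ^ (1/r)) := by
  have hint : interior (Ioi (0:ℝ)) = Ioi 0 := interior_Ioi
  set h : ℝ → ℝ := fun t => (u + v * t ^ r) ^ (1/r) with hh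
  set h₁ : ℝ → ℝ := fun t => v * t ^ (r-1) * (u + v * t ^ r) ^ (1/r - 1) with hh1
  set h₂ : ℝ → ℝ := fun t => v * u * (r-1) * t ^ (r-2) * (u + v * t ^ r) ^ (1/r - 2) with hh2
  have hφpos : ∀ t : ℝ, 0 < t → 0 < u + v * t ^ r := fun t ht => by positivity
  have hφd : ∀ t : ℝ, 0 < t → HasDerivAt (fun t => u + v * t ^ r) (v * (r * t ^ (r-1))) t := by
    intro t ht
    exact ((Real.hasDerivAt_rpow_const (Or.inl ht.ne')).const_mul v).const_add u
  have hd1 : ∀ t ∈ Ioi (0:ℝ), HasDerivAt h (h₁ t) t := by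
    intro t ht
    have ht : (0:ℝ) < t := ht
    have := (Real.hasDerivAt_rpow_const (p := 1/r) (Or.inl (hφpos t ht).ne')).comp t (hφd t ht)
    refine this.congr_deriv ?_
    simp only [hh1]
    field_simp
  have hd2 : ∀ t ∈ Ioi (0:ℝ), HasDerivAt h₁ (h₂ t) t := by
    intro t ht
    have ht : (0:ℝ) < t := ht
    have d1 : HasDerivAt (fun t : ℝ => v * t ^ (r-1)) (v * ((r-1) * t ^ (r-1-1))) t :=
      (Real.hasDerivAt_rpow_const (Or.inl ht.ne')).const_mul v
    have d2 : HasDerivAt (fun t : ℝ => (u + v * t ^ r) ^ (1/r - 1))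
        ((1/r - 1) * (u + v * t ^ r) ^ (1/r - 1 - 1) * (v * (r * t ^ (r-1)))) t :=
      by have := (Real.hasDerivAt_rpow_const (p := 1/r - 1) (Or.inl (hφpos t ht).ne')).comp t (hφd t ht); exact this
    have := d1.mul d2
    refine this.congr_deriv ?_
    symm
    have e1 : t ^ (r-1) * t ^ (r-1) = t ^ (r-2) * t ^ r := by
      rw [← Real.rpow_add ht, ← Real.rpow_add ht]; congr 1; ring
    have e2 : (u + v * t ^ r) ^ (1/r - 1 - 1) = (u + v * t ^ r) ^ (1/r - 2) := by
      congr 1; ring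
    have e2' : (u + v * t ^ r) ^ (1/r - 1) = (u + v * t ^ r) ^ (1/r - 2) * (u + v * t ^ r) := by
      rw [← Real.rpow_add_one (hφpos t ht).ne']; congr 1; ring
    have e3 : (1/r - 1) * r = 1 - r := by field_simp
    simp only [hh1, hh2]
    rw [show r - 1 - 1 = r - 2 by ring, e2, e2']
    set T := t ^ r with hT
    set A1 := t ^ (r-1) with hA1
    set A2 := t ^ (r-2) with hA2
    set B2 := (u + v * T) ^ (1/r - 2) with hB2
    linear_combination (-(v^2*((1/r-1)*r)*B2)) * e1 + (-(v^2*A2*B2*T)) * e3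
  have hcont : ContinuousOn h (Ioi (0:ℝ)) := fun t ht =>
    ((hd1 t ht).continuousAt).continuousWithinAt
  refine concaveOn_of_hasDerivWithinAt2_nonpos (convex_Ioi 0) hcont
    (fun t ht => ((hd1 t (by rwa [hint] at ht)).hasDerivWithinAt))
    (fun t ht => ((hd2 t (by rwa [hint] at ht)).hasDerivWithinAt)) ?_
  intro t ht
  rw [hint] at ht
  have ht : (0:ℝ) < t := ht
  have h1 : (0:ℝ) ≤ t ^ (r-2) := (Real.rpow_pos_of_pos ht _).le
  have h2 : (0:ℝ) ≤ (u + v * t ^ r) ^ (1/r - 2) := (Real.rpow_pos_of_pos (hφpos t ht) _).le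
  have h3 : v * u * (r-1) ≤ 0 :=
    mul_nonpos_of_nonneg_of_nonpos (mul_pos hv hu).le (by linarith)
  simp only [hh2]
  exact mul_nonpos_of_nonpos_of_nonneg (mul_nonpos_of_nonpos_of_nonneg h3 h1) h2

/-- Lift 1D concavity to the open quadrant via 1-homogeneity. -/
lemma aux_hom {h : ℝ → ℝ} (hh : ConcaveOn ℝ (Ioi (0:ℝ)) h) {f : ℝ × ℝ → ℝ}
    (hf : ∀ s t : ℝ, 0 < s → 0 < t → f (s, t) = s * h (t / s)) :
    ConcaveOn ℝ (Ioi (0:ℝ) ×ˢ Ioi (0:ℝ)) f := by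
  refine ⟨(convex_Ioi 0).prod (convex_Ioi 0), ?_⟩
  rintro ⟨x1, x2⟩ hx ⟨y1, y2⟩ hy a b ha hb hab
  obtain ⟨hx1, hx2⟩ : 0 < x1 ∧ 0 < x2 := ⟨hx.1, hx.2⟩
  obtain ⟨hy1, hy2⟩ : 0 < y1 ∧ 0 < y2 := ⟨hy.1, hy.2⟩
  rcases eq_or_lt_of_le ha with rfl | ha'
  · simp only [zero_smul, zero_add, smul_eq_mul, zero_mul] at *
    rw [show b = 1 by linarith]
    simp [Prod.smul_def]
  rcases eq_or_lt_of_le hb with rfl | hb'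
  · simp only [add_zero, smul_eq_mul, zero_mul] at *
    rw [show a = 1 by linarith]
    simp [Prod.smul_def]
  have hσ : 0 < a * x1 + b * y1 := by positivity
  set σ := a * x1 + b * y1 with hσdef
  have key : h ((a * x2 + b * y2) / σ)
      ≥ (a * x1 / σ) * h (x2 / x1) + (b * y1 / σ) * h (y2 / y1) := by
    have hmem1 : x2 / x1 ∈ Ioi (0:ℝ) := div_pos hx2 hx1
    have hmem2 : y2 / y1 ∈ Ioi (0:ℝ) := div_pos hy2 hy1
    have hcomb : (a * x1 / σ) • (x2 / x1) + (b * y1 / σ) • (y2 / y1)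
        = (a * x2 + b * y2) / σ := by
      simp only [smul_eq_mul]
      field_simp
    have := hh.2 hmem1 hmem2 (show (0:ℝ) ≤ a * x1 / σ by positivity)
      (show (0:ℝ) ≤ b * y1 / σ by positivity)
      (show a * x1 / σ + b * y1 / σ = 1 by field_simp; exact hσdef.symm)
    rw [hcomb] at this
    simpa [smul_eq_mul] using this
  have hfx : f (x1, x2) = x1 * h (x2 / x1) := hf _ _ hx1 hx2
  have hfy : f (y1, y2) = y1 * h (y2 / y1) := hf _ _ hy1 hy2
  have hfz : f (a • (x1, x2) + b • (y1, y2)) = σ * h ((a * x2 + b * y2) / σ) := by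
    have : a • (x1, x2) + b • (y1, y2) = (σ, a * x2 + b * y2) := by
      simp [Prod.smul_def, Prod.ext_iff, hσdef]
    rw [this]
    exact hf _ _ hσ (by positivity)
  rw [hfz, smul_eq_mul, smul_eq_mul, hfx, hfy]
  calc a * (x1 * h (x2 / x1)) + b * (y1 * h (y2 / y1))
      = σ * ((a * x1 / σ) * h (x2 / x1) + (b * y1 / σ) * h (y2 / y1)) := by
        field_simp
    _ ≤ σ * h ((a * x2 + b * y2) / σ) := by
        apply mul_le_mul_of_nonneg_left key hσ.le

/-- Extend concavity from the open quadrant to the closed quadrant via continuity within. -/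
lemma aux_ext {f : ℝ × ℝ → ℝ}
    (h1 : ConcaveOn ℝ (Ioi (0:ℝ) ×ˢ Ioi (0:ℝ)) f)
    (h2 : ∀ p ∈ (Ici (0:ℝ) ×ˢ Ici (0:ℝ)), ContinuousWithinAt f (Ici (0:ℝ) ×ˢ Ici (0:ℝ)) p) :
    ConcaveOn ℝ (Ici (0:ℝ) ×ˢ Ici (0:ℝ)) f := by
  have hQ : Convex ℝ (Ici (0:ℝ) ×ˢ Ici (0:ℝ)) := (convex_Ici 0).prod (convex_Ici 0)
  refine ⟨hQ, ?_⟩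
  intro x hx y hy a b ha hb hab
  have hz : a • x + b • y ∈ Ici (0:ℝ) ×ˢ Ici (0:ℝ) := hQ hx hy ha hb hab
  have hmemQ : ∀ p ∈ (Ici (0:ℝ) ×ˢ Ici (0:ℝ)), ∀ ε ∈ Ioi (0:ℝ),
      p + (ε, ε) ∈ Ioi (0:ℝ) ×ˢ Ioi (0:ℝ) := by
    rintro ⟨p1, p2⟩ ⟨hp1, hp2⟩ ε hε
    exact ⟨by simpa using add_pos_of_nonneg_of_pos hp1 hε,
           by simpa using add_pos_of_nonneg_of_pos hp2 hε⟩
  have lim : ∀ p ∈ (Ici (0:ℝ) ×ˢ Ici (0:ℝ)),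
      Filter.Tendsto (fun ε : ℝ => f (p + (ε, ε))) (nhdsWithin 0 (Ioi 0)) (nhds (f p)) := by
    intro p hp
    apply (h2 p hp).tendsto.comp
    rw [tendsto_nhdsWithin_iff]
    constructor
    · have : Filter.Tendsto (fun ε : ℝ => p + (ε, ε)) (nhds 0) (nhds (p + (0, 0))) := by
        exact (continuous_const.add (continuous_id.prodMk continuous_id)).tendsto 0
      simpa [show p + ((0:ℝ), (0:ℝ)) = p from Prod.ext (add_zero _) (add_zero _)] using
        this.mono_left (nhdsWithin_le_nhds (s := Ioi 0))
    · filter_upwards [self_mem_nhdsWithin] with ε hε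
      exact Set.prod_mono (Ioi_subset_Ici le_rfl) (Ioi_subset_Ici le_rfl) (hmemQ p hp ε hε)
  have key : ∀ ε ∈ Ioi (0:ℝ),
      a * f (x + (ε, ε)) + b * f (y + (ε, ε)) ≤ f (a • x + b • y + (ε, ε)) := by
    intro ε hε
    have := h1.2 (hmemQ x hx ε hε) (hmemQ y hy ε hε) ha hb hab
    have heq : a • (x + (ε, ε)) + b • (y + (ε, ε)) = a • x + b • y + (ε, ε) := by
      rw [smul_add, smul_add, add_add_add_comm, ← add_smul, hab, one_smul]
    rw [heq] at this
    simpa [smul_eq_mul] using this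
  have limA : Filter.Tendsto (fun ε : ℝ => a * f (x + (ε, ε)) + b * f (y + (ε, ε)))
      (nhdsWithin 0 (Ioi 0)) (nhds (a * f x + b * f y)) :=
    ((lim x hx).const_mul a).add ((lim y hy).const_mul b)
  have hev : (fun ε : ℝ => a * f (x + (ε, ε)) + b * f (y + (ε, ε)))
      ≤ᶠ[nhdsWithin 0 (Ioi 0)] fun ε : ℝ => f (a • x + b • y + (ε, ε)) := by
    filter_upwards [self_mem_nhdsWithin] with ε hε
    exact key ε hε
  have := le_of_tendsto_of_tendsto limA (lim _ hz) hev
  simpa [smul_eq_mul] using this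

noncomputable def thetaG (m u s t : ℝ) : ℝ :=
  if m = 1 then s ^ u * t ^ (1 - u)
  else if m < 1 then (if s = 0 ∨ t = 0 then 0
    else (u * s ^ (m-1) + (1-u) * t ^ (m-1)) ^ (1/(m-1)))
  else (u * s ^ (m-1) + (1-u) * t ^ (m-1)) ^ (1/(m-1))

/-- geometric mean concavity on closed quadrant -/
lemma aux_geom {u : ℝ} (hu : 0 < u) (hu1 : u < 1) :
    ConcaveOn ℝ (Ici (0:ℝ) ×ˢ Ici (0:ℝ)) (fun p : ℝ × ℝ => p.1 ^ u * p.2 ^ (1-u)) := by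
  have hv : 0 < 1 - u := by linarith
  refine ⟨(convex_Ici 0).prod (convex_Ici 0), ?_⟩
  rintro ⟨x1, x2⟩ ⟨hx1, hx2⟩ ⟨y1, y2⟩ ⟨hy1, hy2⟩ a b ha hb hab
  simp only [Set.mem_Ici] at hx1 hx2 hy1 hy2
  simp only [Prod.smul_def, smul_eq_mul, Prod.mk_add_mk]
  set S := a * x1 + b * y1 with hS
  set T := a * x2 + b * y2 with hT
  show a * (x1 ^ u * x2 ^ (1-u)) + b * (y1 ^ u * y2 ^ (1-u)) ≤ S ^ u * T ^ (1-u)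
  have hSnn : (0:ℝ) ≤ S := add_nonneg (mul_nonneg ha hx1) (mul_nonneg hb hy1)
  have hTnn : (0:ℝ) ≤ T := add_nonneg (mul_nonneg ha hx2) (mul_nonneg hb hy2)
  rcases eq_or_lt_of_le hSnn with hS0 | hS0
  · have h1 : a * x1 = 0 ∧ b * y1 = 0 := by
      constructor <;> nlinarith [mul_nonneg ha hx1, mul_nonneg hb hy1]
    have e1 : a * (x1 ^ u * x2 ^ (1-u)) = 0 := by
      rcases mul_eq_zero.1 h1.1 with h | h
      · simp [h]
      · simp [h, Real.zero_rpow hu.ne']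
    have e2 : b * (y1 ^ u * y2 ^ (1-u)) = 0 := by
      rcases mul_eq_zero.1 h1.2 with h | h
      · simp [h]
      · simp [h, Real.zero_rpow hu.ne']
    rw [e1, e2, ← hS0, Real.zero_rpow hu.ne']
    simp
  rcases eq_or_lt_of_le hTnn with hT0 | hT0
  · have h1 : a * x2 = 0 ∧ b * y2 = 0 := by
      constructor <;> nlinarith [mul_nonneg ha hx2, mul_nonneg hb hy2]
    have e1 : a * (x1 ^ u * x2 ^ (1-u)) = 0 := by
      rcases mul_eq_zero.1 h1.1 with h | h
      · simp [h]
      · simp [h, Real.zero_rpow hv.ne']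
    have e2 : b * (y1 ^ u * y2 ^ (1-u)) = 0 := by
      rcases mul_eq_zero.1 h1.2 with h | h
      · simp [h]
      · simp [h, Real.zero_rpow hv.ne']
    rw [e1, e2, ← hT0, Real.zero_rpow hv.ne']
    simp
  -- main case
  have key : ∀ z1 z2 : ℝ, 0 ≤ z1 → 0 ≤ z2 →
      z1 ^ u * z2 ^ (1-u) ≤ S ^ u * T ^ (1-u) * (u * (z1/S) + (1-u) * (z2/T)) := by
    intro z1 z2 hz1 hz2
    have amgm : (z1/S) ^ u * (z2/T) ^ (1-u) ≤ u * (z1/S) + (1-u) * (z2/T) :=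
      Real.geom_mean_le_arith_mean2_weighted hu.le hv.le (by positivity) (by positivity)
        (by ring)
    have e1 : z1 ^ u = S ^ u * (z1/S) ^ u := by
      rw [← Real.mul_rpow hS0.le (by positivity)]
      congr 1
      field_simp
    have e2 : z2 ^ (1-u) = T ^ (1-u) * (z2/T) ^ (1-u) := by
      rw [← Real.mul_rpow hT0.le (by positivity)]
      congr 1
      field_simp
    calc z1 ^ u * z2 ^ (1-u) = S ^ u * T ^ (1-u) * ((z1/S) ^ u * (z2/T) ^ (1-u)) := by
          rw [e1, e2]; ring
      _ ≤ S ^ u * T ^ (1-u) * (u * (z1/S) + (1-u) * (z2/T)) := by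
          apply mul_le_mul_of_nonneg_left amgm (by positivity)
  have comb : a * (u * (x1/S) + (1-u) * (x2/T)) + b * (u * (y1/S) + (1-u) * (y2/T)) = 1 := by
    field_simp
    ring
  calc a * (x1 ^ u * x2 ^ (1-u)) + b * (y1 ^ u * y2 ^ (1-u))
      ≤ a * (S ^ u * T ^ (1-u) * (u * (x1/S) + (1-u) * (x2/T)))
        + b * (S ^ u * T ^ (1-u) * (u * (y1/S) + (1-u) * (y2/T))) := by
        exact add_le_add (mul_le_mul_of_nonneg_left (key _ _ hx1 hx2) ha)
          (mul_le_mul_of_nonneg_left (key _ _ hy1 hy2) hb)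
    _ = S ^ u * T ^ (1-u) *
        (a * (u * (x1/S) + (1-u) * (x2/T)) + b * (u * (y1/S) + (1-u) * (y2/T))) := by ring
    _ = S ^ u * T ^ (1-u) := by rw [comb, mul_one]

lemma aux_alg {u v r s t : ℝ} (hu : 0 < u) (hv : 0 < v) (hr0 : r ≠ 0)
    (hs : 0 < s) (ht : 0 < t) :
    (u * s ^ r + v * t ^ r) ^ (1/r) = s * (u + v * (t/s) ^ r) ^ (1/r) := by
  have hsr : 0 < s ^ r := Real.rpow_pos_of_pos hs r
  have htr : 0 < t ^ r := Real.rpow_pos_of_pos ht r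
  have h1 : (t/s) ^ r = t ^ r / s ^ r := Real.div_rpow ht.le hs.le r
  have h2 : u + v * (t ^ r / s ^ r) = (u * s ^ r + v * t ^ r) / s ^ r := by
    field_simp
  have h3 : (s ^ r) ^ (1/r) = s := by
    rw [← Real.rpow_mul hs.le, mul_one_div_cancel hr0, Real.rpow_one]
  rw [h1, h2, Real.div_rpow (by positivity) hsr.le, h3]
  field_simp

lemma aux_case_gt {m u : ℝ} (hm1 : 1 < m) (hm2 : m ≤ 2) (hu : 0 < u) (hu1 : u < 1) :
    ConcaveOn ℝ (Ici (0:ℝ) ×ˢ Ici (0:ℝ))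
      (fun p : ℝ × ℝ => (u * p.1 ^ (m-1) + (1-u) * p.2 ^ (m-1)) ^ (1/(m-1))) := by
  set r := m - 1 with hrdef
  have hr : 0 < r := by simp [hrdef]; linarith
  have hr1 : r ≤ 1 := by simp [hrdef]; linarith
  have hv : 0 < 1 - u := by linarith
  apply aux_ext
  · apply aux_hom (aux_oneD hu hv hr1 hr.ne')
    intro s t hs ht
    exact aux_alg hu hv hr.ne' hs ht
  · intro p hp
    apply ContinuousAt.continuousWithinAt
    have hbase : ContinuousAt (fun p : ℝ × ℝ => u * p.1 ^ r + (1-u) * p.2 ^ r) p := by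
      apply ContinuousAt.add
      · exact (continuousAt_const.mul
          ((Real.continuousAt_rpow_const _ _ (Or.inr hr.le)).comp continuous_fst.continuousAt))
      · exact (continuousAt_const.mul
          ((Real.continuousAt_rpow_const _ _ (Or.inr hr.le)).comp continuous_snd.continuousAt))
    exact (Real.continuousAt_rpow_const _ _ (Or.inr (by positivity))).comp hbase

lemma aux_case_lt {m u : ℝ} (hm0 : 0 < m) (hm1 : m < 1) (hu : 0 < u) (hu1 : u < 1) :
    ConcaveOn ℝ (Ici (0:ℝ) ×ˢ Ici (0:ℝ))
      (fun p : ℝ × ℝ => if p.1 = 0 ∨ p.2 = 0 then 0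
        else (u * p.1 ^ (m-1) + (1-u) * p.2 ^ (m-1)) ^ (1/(m-1))) := by
  set r := m - 1 with hrdef
  have hr : r < 0 := by simp [hrdef]; linarith
  have hr1 : r ≤ 1 := by simp [hrdef]; linarith
  have hv : 0 < 1 - u := by linarith
  set f : ℝ × ℝ → ℝ := fun p => if p.1 = 0 ∨ p.2 = 0 then 0
        else (u * p.1 ^ r + (1-u) * p.2 ^ r) ^ (1/r) with hfdef
  have hfpos : ∀ s t : ℝ, 0 < s → 0 < t →
      f (s, t) = (u * s ^ r + (1-u) * t ^ r) ^ (1/r) := by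
    intro s t hs ht
    simp [hfdef, hs.ne', ht.ne']
  -- bounds on Q
  have hf0 : ∀ q ∈ (Ici (0:ℝ) ×ˢ Ici (0:ℝ)), 0 ≤ f q := by
    rintro ⟨q1, q2⟩ hq
    by_cases h : q1 = 0 ∨ q2 = 0
    · simp [hfdef, h]
    · push_neg at h
      have hq1 : 0 < q1 := lt_of_le_of_ne hq.1 (Ne.symm h.1)
      have hq2 : 0 < q2 := lt_of_le_of_ne hq.2 (Ne.symm h.2)
      rw [hfpos q1 q2 hq1 hq2]
      exact Real.rpow_nonneg (add_nonneg (by positivity)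
        (mul_nonneg hv.le (Real.rpow_pos_of_pos hq2 r).le)) _
  have hbnd1 : ∀ q ∈ (Ici (0:ℝ) ×ˢ Ici (0:ℝ)), f q ≤ u ^ (1/r) * q.1 := by
    rintro ⟨q1, q2⟩ hq
    by_cases h : q1 = 0 ∨ q2 = 0
    · simp only [hfdef]
      rw [if_pos h]
      have : (0:ℝ) ≤ q1 := hq.1
      positivity
    · push_neg at h
      have hq1 : 0 < q1 := lt_of_le_of_ne hq.1 (Ne.symm h.1)
      have hq2 : 0 < q2 := lt_of_le_of_ne hq.2 (Ne.symm h.2)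
      rw [hfpos q1 q2 hq1 hq2]
      have h1 : (0:ℝ) < u * q1 ^ r := by positivity
      have h2 : u * q1 ^ r ≤ u * q1 ^ r + (1-u) * q2 ^ r := by
        nlinarith [mul_pos hv (Real.rpow_pos_of_pos hq2 r)]
      have h3 : 1/r ≤ 0 := by rw [div_nonpos_iff]; left; exact ⟨zero_le_one, hr.le⟩
      calc (u * q1 ^ r + (1-u) * q2 ^ r) ^ (1/r) ≤ (u * q1 ^ r) ^ (1/r) :=
            Real.rpow_le_rpow_of_nonpos h1 h2 h3
        _ = u ^ (1/r) * q1 := by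
            rw [Real.mul_rpow hu.le (by positivity), ← Real.rpow_mul hq1.le,
              mul_one_div_cancel (ne_of_lt hr), Real.rpow_one]
  have hbnd2 : ∀ q ∈ (Ici (0:ℝ) ×ˢ Ici (0:ℝ)), f q ≤ (1-u) ^ (1/r) * q.2 := by
    rintro ⟨q1, q2⟩ hq
    by_cases h : q1 = 0 ∨ q2 = 0
    · simp only [hfdef]
      rw [if_pos h]
      have : (0:ℝ) ≤ q2 := hq.2
      positivity
    · push_neg at h
      have hq1 : 0 < q1 := lt_of_le_of_ne hq.1 (Ne.symm h.1)
      have hq2 : 0 < q2 := lt_of_le_of_ne hq.2 (Ne.symm h.2)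
      rw [hfpos q1 q2 hq1 hq2]
      have h1 : (0:ℝ) < (1-u) * q2 ^ r := mul_pos hv (Real.rpow_pos_of_pos hq2 r)
      have h2 : (1-u) * q2 ^ r ≤ u * q1 ^ r + (1-u) * q2 ^ r := by
        nlinarith [mul_pos hu (Real.rpow_pos_of_pos hq1 r)]
      have h3 : 1/r ≤ 0 := by rw [div_nonpos_iff]; left; exact ⟨zero_le_one, hr.le⟩
      calc (u * q1 ^ r + (1-u) * q2 ^ r) ^ (1/r) ≤ ((1-u) * q2 ^ r) ^ (1/r) :=
            Real.rpow_le_rpow_of_nonpos h1 h2 h3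
        _ = (1-u) ^ (1/r) * q2 := by
            rw [Real.mul_rpow hv.le (by positivity), ← Real.rpow_mul hq2.le,
              mul_one_div_cancel (ne_of_lt hr), Real.rpow_one]
  apply aux_ext
  · apply aux_hom (aux_oneD hu hv hr1 (ne_of_lt hr))
    intro s t hs ht
    rw [hfpos s t hs ht]
    exact aux_alg hu hv (ne_of_lt hr) hs ht
  · rintro ⟨p1, p2⟩ hp
    have hp1 : (0:ℝ) ≤ p1 := hp.1
    have hp2 : (0:ℝ) ≤ p2 := hp.2
    rcases eq_or_lt_of_le hp1 with hp1z | hp1pos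
    · -- p1 = 0 : squeeze with u^(1/r) * q.1
      have hfp : f (p1, p2) = 0 := by simp [hfdef, ← hp1z]
      unfold ContinuousWithinAt
      rw [hfp]
      apply squeeze_zero' (g := fun q : ℝ × ℝ => u ^ (1/r) * q.1)
      · filter_upwards [self_mem_nhdsWithin] with q hq using hf0 q hq
      · filter_upwards [self_mem_nhdsWithin] with q hq using hbnd1 q hq
      · have : Filter.Tendsto (fun q : ℝ × ℝ => u ^ (1/r) * q.1) (nhds (p1, p2))
            (nhds (u ^ (1/r) * p1)) := (continuous_const.mul continuous_fst).tendsto _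
        have h0 : u ^ (1/r) * p1 = 0 := by rw [← hp1z, mul_zero]
        rw [h0] at this
        exact this.mono_left nhdsWithin_le_nhds
    rcases eq_or_lt_of_le hp2 with hp2z | hp2pos
    · have hfp : f (p1, p2) = 0 := by simp [hfdef, ← hp2z]
      unfold ContinuousWithinAt
      rw [hfp]
      apply squeeze_zero' (g := fun q : ℝ × ℝ => (1-u) ^ (1/r) * q.2)
      · filter_upwards [self_mem_nhdsWithin] with q hq using hf0 q hq
      · filter_upwards [self_mem_nhdsWithin] with q hq using hbnd2 q hq
      · have : Filter.Tendsto (fun q : ℝ × ℝ => (1-u) ^ (1/r) * q.2) (nhds (p1, p2))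
            (nhds ((1-u) ^ (1/r) * p2)) := (continuous_const.mul continuous_snd).tendsto _
        have h0 : (1-u) ^ (1/r) * p2 = 0 := by rw [← hp2z, mul_zero]
        rw [h0] at this
        exact this.mono_left nhdsWithin_le_nhds
    · -- interior: f eventually equals the formula
      apply ContinuousAt.continuousWithinAt
      have hopen : ∀ᶠ q : ℝ × ℝ in nhds (p1, p2), 0 < q.1 ∧ 0 < q.2 := by
        have : IsOpen {q : ℝ × ℝ | 0 < q.1 ∧ 0 < q.2} :=
          (isOpen_lt continuous_const continuous_fst).inter
            (isOpen_lt continuous_const continuous_snd)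
        exact this.mem_nhds ⟨hp1pos, hp2pos⟩
      have heq : (fun q : ℝ × ℝ => (u * q.1 ^ r + (1-u) * q.2 ^ r) ^ (1/r)) =ᶠ[nhds (p1, p2)] f := by
        filter_upwards [hopen] with q hq
        exact (hfpos q.1 q.2 hq.1 hq.2).symm
      have hca : ContinuousAt (fun q : ℝ × ℝ => (u * q.1 ^ r + (1-u) * q.2 ^ r) ^ (1/r)) (p1, p2) := by
        have hbase : ContinuousAt (fun q : ℝ × ℝ => u * q.1 ^ r + (1-u) * q.2 ^ r) (p1, p2) := by
          apply ContinuousAt.add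
          · exact continuousAt_const.mul
              ((Real.continuousAt_rpow_const _ _ (Or.inl hp1pos.ne')).comp (g := fun x : ℝ => x ^ r) (x := (p1, p2))
                continuous_fst.continuousAt)
          · exact continuousAt_const.mul
              ((Real.continuousAt_rpow_const _ _ (Or.inl hp2pos.ne')).comp (g := fun x : ℝ => x ^ r) (x := (p1, p2))
                continuous_snd.continuousAt)
        have hbpos : 0 < u * p1 ^ r + (1-u) * p2 ^ r :=
          add_pos (mul_pos hu (Real.rpow_pos_of_pos hp1pos r))
            (mul_pos hv (Real.rpow_pos_of_pos hp2pos r))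
        exact hbase.rpow_const (Or.inl hbpos.ne')
      exact hca.congr heq



/-- ∫ u in 0..1, (u*a+(1-u)*b)^p = (a^(p+1)-b^(p+1))/((p+1)*(a-b)) for a,b>0, a≠b, p+1≠0. -/
lemma aux_int_mean {a b p : ℝ} (ha : 0 < a) (hb : 0 < b) (hab : a ≠ b) (hp : p + 1 ≠ 0) :
    ∫ u in (0:ℝ)..1, (u * a + (1-u) * b) ^ p
      = (a ^ (p+1) - b ^ (p+1)) / ((p+1) * (a - b)) := by
  have hbase : ∀ u ∈ Icc (0:ℝ) 1, 0 < u * a + (1-u) * b := by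
    intro u hu
    rcases le_total a b with h | h
    · nlinarith [hu.1, hu.2, mul_nonneg (sub_nonneg.2 hu.2) (sub_nonneg.2 h)]
    · nlinarith [hu.1, hu.2, mul_nonneg hu.1 (sub_nonneg.2 h)]
  have hderiv : ∀ u ∈ uIcc (0:ℝ) 1,
      HasDerivAt (fun u : ℝ => (u * a + (1-u) * b) ^ (p+1) / ((p+1) * (a - b)))
        ((u * a + (1-u) * b) ^ p) u := by
    intro u hu
    rw [uIcc_of_le (by norm_num : (0:ℝ) ≤ 1)] at hu
    have hb0 : 0 < u * a + (1-u) * b := hbase u hu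
    have hin : HasDerivAt (fun u : ℝ => u * a + (1-u) * b) (a - b) u := by
      have h1 : HasDerivAt (fun u : ℝ => u * a) a u := by
        simpa using (hasDerivAt_id u).mul_const a
      have h2 : HasDerivAt (fun u : ℝ => (1-u) * b) (-b) u := by
        simpa using ((hasDerivAt_id u).const_sub 1).mul_const b
      exact (h1.add h2).congr_deriv (by ring)
    have houter := (Real.hasDerivAt_rpow_const (p := p+1) (Or.inl hb0.ne')).comp u hin
    have := houter.div_const ((p+1) * (a - b))
    refine this.congr_deriv ?_
    have habne : a - b ≠ 0 := sub_ne_zero.2 hab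
    field_simp
    ring
  have hcont : IntervalIntegrable (fun u : ℝ => (u * a + (1-u) * b) ^ p) volume 0 1 := by
    apply ContinuousOn.intervalIntegrable
    rw [uIcc_of_le (by norm_num : (0:ℝ) ≤ 1)]
    apply ContinuousOn.rpow_const
    · fun_prop
    · exact fun u hu => Or.inl (hbase u hu).ne'
  rw [intervalIntegral.integral_eq_sub_of_hasDerivAt hderiv hcont]
  norm_num
  rw [div_sub_div_same]

lemma aux_int_exp {c L : ℝ} (hL : L ≠ 0) :
    ∫ u in (0:ℝ)..1, Real.exp (c + u * L) = (Real.exp (c + L) - Real.exp c) / L := by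
  have hderiv : ∀ u ∈ uIcc (0:ℝ) 1,
      HasDerivAt (fun u : ℝ => Real.exp (c + u * L) / L) (Real.exp (c + u * L)) u := by
    intro u _
    have hin : HasDerivAt (fun u : ℝ => c + u * L) L u := by
      simpa using ((hasDerivAt_id u).mul_const L).const_add c
    have := ((Real.hasDerivAt_exp (c + u * L)).comp u hin).div_const L
    refine this.congr_deriv ?_
    field_simp
  have hcont : IntervalIntegrable (fun u : ℝ => Real.exp (c + u * L)) volume 0 1 :=
    (Real.continuous_exp.comp (by fun_prop)).intervalIntegrable 0 1
  rw [intervalIntegral.integral_eq_sub_of_hasDerivAt hderiv hcont]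
  norm_num
  rw [div_sub_div_same]

lemma aux_Ioo_eq (g : ℝ → ℝ) : ∫ u in Ioo (0:ℝ) 1, g u = ∫ u in (0:ℝ)..1, g u := by
  rw [intervalIntegral.integral_of_le zero_le_one, integral_Ioc_eq_integral_Ioo]

lemma aux_repr {m : ℝ} (hm0 : 0 < m) (hm2 : m ≤ 2) {s t : ℝ} (hs : 0 ≤ s) (ht : 0 ≤ t) :
    IntegrableOn (fun u => thetaG m u s t) (Ioo (0:ℝ) 1) volume ∧
    theta m s t = ∫ u in Ioo (0:ℝ) 1, thetaG m u s t := by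
  have hm0' : m ≠ 0 := hm0.ne'
  rcases eq_or_ne s t with heq | hne
  · -- diagonal
    subst heq
    have hG : EqOn (fun u => thetaG m u s s) (fun _ => s) (Ioo (0:ℝ) 1) := by
      intro u hu
      rcases eq_or_lt_of_le hs with h0 | hpos
      · -- s = 0
        by_cases hm1 : m = 1
        · simp [thetaG, hm1, ← h0, Real.zero_rpow (ne_of_gt hu.1)]
        · by_cases hml : m < 1
          · simp [thetaG, hm1, hml, ← h0]
          · have hr : m - 1 ≠ 0 := sub_ne_zero.2 hm1
            simp [thetaG, hm1, hml, ← h0, Real.zero_rpow hr,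
              Real.zero_rpow (one_div_ne_zero hr), Real.zero_rpow (inv_ne_zero hr)]
      · by_cases hm1 : m = 1
        · simp only [thetaG, if_pos hm1]
          rw [← Real.rpow_add hpos]
          norm_num
        · have hr : m - 1 ≠ 0 := sub_ne_zero.2 hm1
          have key : (u * s ^ (m-1) + (1-u) * s ^ (m-1)) ^ (1/(m-1)) = s := by
            rw [show u * s ^ (m-1) + (1-u) * s ^ (m-1) = s ^ (m-1) by ring,
              ← Real.rpow_mul hs, mul_one_div_cancel hr, Real.rpow_one]
          by_cases hml : m < 1
          · have hcond : ¬(s = (0:ℝ) ∨ s = 0) := by simp [hpos.ne']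
            simp only [thetaG, if_neg hm1, if_pos hml, if_neg hcond]
            exact key
          · simp only [thetaG, if_neg hm1, if_neg hml]
            exact key
    constructor
    · exact ((integrableOn_const (by simp [Real.volume_Ioo])).congr_fun
        hG.symm measurableSet_Ioo)
    · rw [setIntegral_congr_fun measurableSet_Ioo hG, setIntegral_const]
      simp [Real.volume_Ioo, theta]
  · -- off-diagonal
    by_cases hzero : s = 0 ∨ t = 0
    · -- boundary
      by_cases hm1' : 1 < m
      · -- m > 1 case
        have hm1 : m ≠ 1 := by linarith
        have hml : ¬ m < 1 := by linarith
        have hr : 0 < m - 1 := by linarith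
        have hp1 : (0:ℝ) < 1/(m-1) := by positivity
        have hint1 : ∫ x in (0:ℝ)..1, x ^ (1/(m-1)) = 1 / (1/(m-1) + 1) := by
          rw [integral_rpow (Or.inl (by linarith))]
          rw [Real.one_rpow, Real.zero_rpow (by positivity)]
          norm_num
        rcases hzero with h0 | h0
        · -- s = 0, t > 0
          have htpos : 0 < t := lt_of_le_of_ne ht (fun h => hne (by rw [h0, ← h]))
          have hG : EqOn (fun u => thetaG m u s t)
              (fun u => (1-u) ^ (1/(m-1)) * t) (Ioo (0:ℝ) 1) := by
            intro u hu
            simp only [thetaG, if_neg hm1, if_neg hml, h0,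
              Real.zero_rpow hr.ne', mul_zero, zero_add]
            rw [Real.mul_rpow (by linarith [hu.2] : (0:ℝ) ≤ 1-u) (Real.rpow_nonneg ht _),
              ← Real.rpow_mul ht, mul_one_div_cancel hr.ne', Real.rpow_one]
          have hii : IntervalIntegrable (fun u : ℝ => (1-u) ^ (1/(m-1)) * t) volume 0 1 := by
            apply ContinuousOn.intervalIntegrable
            apply ContinuousOn.mul _ continuousOn_const
            apply ContinuousOn.rpow_const (by fun_prop)
            exact fun x _ => Or.inr hp1.le
          constructor
          · exact (hii.1.mono_set Ioo_subset_Ioc_self).congr_fun hG.symm measurableSet_Ioo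
          · rw [setIntegral_congr_fun measurableSet_Ioo hG, aux_Ioo_eq,
              intervalIntegral.integral_mul_const,
              intervalIntegral.integral_comp_sub_left (fun x => x ^ (1/(m-1))) 1]
            norm_num
            simp only [one_div] at hint1 ⊢
            rw [hint1]
            rw [theta, if_neg hne, if_pos (Or.inl h0), if_pos hm1', h0]
            field_simp
            try ring
        · -- t = 0, s > 0
          have hspos : 0 < s := lt_of_le_of_ne hs (fun h => hne (by rw [h0, ← h]))
          have hG : EqOn (fun u => thetaG m u s t)
              (fun u => u ^ (1/(m-1)) * s) (Ioo (0:ℝ) 1) := by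
            intro u hu
            simp only [thetaG, if_neg hm1, if_neg hml, h0,
              Real.zero_rpow hr.ne', mul_zero, add_zero]
            rw [Real.mul_rpow (le_of_lt hu.1) (Real.rpow_nonneg hs _),
              ← Real.rpow_mul hs, mul_one_div_cancel hr.ne', Real.rpow_one]
          have hii : IntervalIntegrable (fun u : ℝ => u ^ (1/(m-1)) * s) volume 0 1 := by
            apply ContinuousOn.intervalIntegrable
            apply ContinuousOn.mul _ continuousOn_const
            apply ContinuousOn.rpow_const (by fun_prop)
            exact fun x _ => Or.inr hp1.le
          constructor
          · exact (hii.1.mono_set Ioo_subset_Ioc_self).congr_fun hG.symm measurableSet_Ioo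
          · rw [setIntegral_congr_fun measurableSet_Ioo hG, aux_Ioo_eq,
              intervalIntegral.integral_mul_const]
            simp only [one_div] at hint1 ⊢
            rw [hint1]
            rw [theta, if_neg hne, if_pos (Or.inr h0), if_pos hm1', h0]
            field_simp
            try ring
      · -- m ≤ 1 : boundary value 0
        have hG : EqOn (fun u => thetaG m u s t) (fun _ => (0:ℝ)) (Ioo (0:ℝ) 1) := by
          intro u hu
          by_cases hm1 : m = 1
          · rcases hzero with h0 | h0
            · simp [thetaG, hm1, h0, Real.zero_rpow (ne_of_gt hu.1)]
            · simp [thetaG, hm1, h0, Real.zero_rpow (by linarith [hu.2] : 1 - u ≠ 0)]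
          · have hml : m < 1 := lt_of_le_of_ne (not_lt.1 hm1') hm1
            simp [thetaG, hm1, hml, hzero]
        constructor
        · exact ((integrableOn_const (by simp [Real.volume_Ioo])).congr_fun
            hG.symm measurableSet_Ioo)
        · rw [setIntegral_congr_fun measurableSet_Ioo hG, setIntegral_const]
          simp only [smul_eq_mul, mul_zero]
          rw [theta, if_neg hne, if_pos hzero, if_neg hm1']
    · -- both positive
      push_neg at hzero
      have hspos : 0 < s := lt_of_le_of_ne hs (Ne.symm hzero.1)
      have htpos : 0 < t := lt_of_le_of_ne ht (Ne.symm hzero.2)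
      by_cases hm1 : m = 1
      · -- geometric case
        have hL : Real.log s - Real.log t ≠ 0 := by
          intro h
          apply hne
          rw [← Real.exp_log hspos, ← Real.exp_log htpos, sub_eq_zero.1 h]
        have hG : EqOn (fun u => thetaG m u s t)
            (fun u => Real.exp (Real.log t + u * (Real.log s - Real.log t))) (Ioo (0:ℝ) 1) := by
          intro u _
          simp only [thetaG, if_pos hm1]
          rw [Real.rpow_def_of_pos hspos, Real.rpow_def_of_pos htpos, ← Real.exp_add]
          congr 1
          ring
        have hii : IntervalIntegrable
            (fun u : ℝ => Real.exp (Real.log t + u * (Real.log s - Real.log t))) volume 0 1 :=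
          (Real.continuous_exp.comp (by fun_prop)).intervalIntegrable 0 1
        constructor
        · exact (hii.1.mono_set Ioo_subset_Ioc_self).congr_fun hG.symm measurableSet_Ioo
        · rw [setIntegral_congr_fun measurableSet_Ioo hG, aux_Ioo_eq, aux_int_exp hL]
          rw [show Real.log t + (Real.log s - Real.log t) = Real.log s by ring,
            Real.exp_log hspos, Real.exp_log htpos]
          rw [theta, if_neg hne, if_neg (by push_neg; exact ⟨hzero.1, hzero.2⟩), if_pos hm1]
      · -- power case
        have hr : m - 1 ≠ 0 := sub_ne_zero.2 hm1
        have ha : 0 < s ^ (m-1) := Real.rpow_pos_of_pos hspos _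
        have hb : 0 < t ^ (m-1) := Real.rpow_pos_of_pos htpos _
        have hab : s ^ (m-1) ≠ t ^ (m-1) := by
          rcases lt_or_gt_of_ne hne with h | h
          · rcases lt_or_gt_of_ne hr with h2 | h2
            · exact (Real.rpow_lt_rpow_of_neg hspos h (by linarith)).ne'
            · exact (Real.rpow_lt_rpow hs h (by linarith)).ne
          · rcases lt_or_gt_of_ne hr with h2 | h2
            · exact (Real.rpow_lt_rpow_of_neg htpos h (by linarith)).ne
            · exact (Real.rpow_lt_rpow ht h (by linarith)).ne'
        have hp : 1/(m-1) + 1 ≠ 0 := by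
          rw [show 1/(m-1) + 1 = m/(m-1) by field_simp; ring]
          exact div_ne_zero hm0' hr
        have hG : EqOn (fun u => thetaG m u s t)
            (fun u => (u * s ^ (m-1) + (1-u) * t ^ (m-1)) ^ (1/(m-1))) (Ioo (0:ℝ) 1) := by
          intro u _
          by_cases hml : m < 1 <;>
            simp [thetaG, hm1, hml, hzero.1, hzero.2]
        have hii : IntervalIntegrable
            (fun u : ℝ => (u * s ^ (m-1) + (1-u) * t ^ (m-1)) ^ (1/(m-1))) volume 0 1 := by
          apply ContinuousOn.intervalIntegrable
          rw [uIcc_of_le (by norm_num : (0:ℝ) ≤ 1)]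
          apply ContinuousOn.rpow_const (by fun_prop)
          intro u hu
          left
          have : 0 < u * s ^ (m-1) + (1-u) * t ^ (m-1) := by
            rcases le_total (s ^ (m-1)) (t ^ (m-1)) with h | h
            · nlinarith [hu.1, hu.2, mul_nonneg (sub_nonneg.2 hu.2) (sub_nonneg.2 h)]
            · nlinarith [hu.1, hu.2, mul_nonneg hu.1 (sub_nonneg.2 h)]
          exact this.ne'
        constructor
        · exact (hii.1.mono_set Ioo_subset_Ioc_self).congr_fun hG.symm measurableSet_Ioo
        · rw [setIntegral_congr_fun measurableSet_Ioo hG, aux_Ioo_eq,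
            aux_int_mean ha hb hab hp]
          have e1 : (s ^ (m-1)) ^ (1/(m-1) + 1) = s ^ m := by
            rw [← Real.rpow_mul hs]
            congr 1
            field_simp
            ring
          have e2 : (t ^ (m-1)) ^ (1/(m-1) + 1) = t ^ m := by
            rw [← Real.rpow_mul ht]
            congr 1
            field_simp
            ring
          rw [e1, e2, theta, if_neg hne, if_neg (by push_neg; exact ⟨hzero.1, hzero.2⟩),
            if_neg hm1]
          have hD : s ^ (m-1) - t ^ (m-1) ≠ 0 := sub_ne_zero.2 hab
          field_simp
          rw [show 1 + (m - 1) = m by ring]; field_simp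


lemma aux_concaveG {m : ℝ} (hm0 : 0 < m) (hm2 : m ≤ 2) {u : ℝ} (hu : u ∈ Ioo (0:ℝ) 1) :
    ConcaveOn ℝ (Ici (0:ℝ) ×ˢ Ici (0:ℝ)) (fun p : ℝ × ℝ => thetaG m u p.1 p.2) := by
  obtain ⟨hu0, hu1⟩ := hu
  by_cases hm1 : m = 1
  · have he : (fun p : ℝ × ℝ => thetaG m u p.1 p.2)
        = fun p : ℝ × ℝ => p.1 ^ u * p.2 ^ (1-u) := by
      funext p; simp [thetaG, hm1]
    rw [he]; exact aux_geom hu0 hu1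
  by_cases hml : m < 1
  · have he : (fun p : ℝ × ℝ => thetaG m u p.1 p.2)
        = fun p : ℝ × ℝ => if p.1 = 0 ∨ p.2 = 0 then 0
            else (u * p.1 ^ (m-1) + (1-u) * p.2 ^ (m-1)) ^ (1/(m-1)) := by
      funext p; simp [thetaG, hm1, hml]
    rw [he]; exact aux_case_lt hm0 hml hu0 hu1
  · have he : (fun p : ℝ × ℝ => thetaG m u p.1 p.2)
        = fun p : ℝ × ℝ => (u * p.1 ^ (m-1) + (1-u) * p.2 ^ (m-1)) ^ (1/(m-1)) := by
      funext p; simp [thetaG, hm1, hml]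
    rw [he]
    exact aux_case_gt (lt_of_le_of_ne (not_lt.1 hml) (Ne.symm hm1)) hm2 hu0 hu1

/-- Concavity of the `m`-mean on `[0,∞)²` for `0 < m ≤ 2`. -/
theorem theta_concave (m : ℝ) (hm0 : 0 < m) (hm2 : m ≤ 2) :
    ConcaveOn ℝ (Set.Ici (0:ℝ) ×ˢ Set.Ici (0:ℝ)) (fun p : ℝ × ℝ => theta m p.1 p.2) := by
  refine ⟨(convex_Ici 0).prod (convex_Ici 0), ?_⟩
  intro x hx y hy a b ha hb hab
  have hz : a • x + b • y ∈ Ici (0:ℝ) ×ˢ Ici (0:ℝ) :=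
    ((convex_Ici (0:ℝ)).prod (convex_Ici 0)) hx hy ha hb hab
  obtain ⟨hxi, hxe⟩ := aux_repr hm0 hm2 hx.1 hx.2
  obtain ⟨hyi, hye⟩ := aux_repr hm0 hm2 hy.1 hy.2
  obtain ⟨hzi, hze⟩ := aux_repr hm0 hm2 hz.1 hz.2
  simp only [smul_eq_mul]
  rw [hxe, hye, hze]
  calc a * (∫ u in Ioo (0:ℝ) 1, thetaG m u x.1 x.2)
        + b * (∫ u in Ioo (0:ℝ) 1, thetaG m u y.1 y.2)
      = ∫ u in Ioo (0:ℝ) 1,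
          (a * thetaG m u x.1 x.2 + b * thetaG m u y.1 y.2) := by
        rw [← integral_const_mul, ← integral_const_mul,
          ← integral_add (hxi.const_mul a) (hyi.const_mul b)]
    _ ≤ ∫ u in Ioo (0:ℝ) 1, thetaG m u (a • x + b • y).1 (a • x + b • y).2 := by
        apply setIntegral_mono_on ((hxi.const_mul a).add (hyi.const_mul b)) hzi
          measurableSet_Ioo
        intro u hu
        have := (aux_concaveG hm0 hm2 hu).2 hx hy ha hb hab
        simpa [smul_eq_mul] using this
end

section
/- If 0 < m₁ < m₂ ≤ 2 then θ_{m₁}(s,t) < θ_{m₂}(s,t) for all s, t > 0 with s ≠ t. -/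
namespace ThetaAux

open Real Set Filter Topology

/-- `sinh (c x) / x`, extended by `c` at `x = 0`. -/
noncomputable def Sh (c x : ℝ) : ℝ := if x = 0 then c else Real.sinh (c * x) / x

lemma Sh_zero (c : ℝ) : Sh c 0 = c := if_pos rfl

lemma Sh_of_ne (c : ℝ) {x : ℝ} (hx : x ≠ 0) : Sh c x = Real.sinh (c * x) / x := if_neg hx

lemma Sh_pos {c : ℝ} (hc : 0 < c) (x : ℝ) : 0 < Sh c x := by
  rcases lt_trichotomy x 0 with h | h | h
  · rw [Sh_of_ne c h.ne]
    exact div_pos_of_neg_of_neg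
      (by rw [Real.sinh_neg_iff]; exact mul_neg_of_pos_of_neg hc h) h
  · simpa [Sh, h] using hc
  · rw [Sh_of_ne c h.ne']
    exact div_pos (by rw [Real.sinh_pos_iff]; exact mul_pos hc h) h

lemma Sh_neg (c x : ℝ) : Sh c (-x) = Sh c x := by
  rcases eq_or_ne x 0 with rfl | hx
  · simp
  · rw [Sh_of_ne c (neg_ne_zero.mpr hx), Sh_of_ne c hx, mul_neg, Real.sinh_neg, neg_div_neg_eq]

lemma Sh_abs (c x : ℝ) : Sh c |x| = Sh c x := by
  rcases le_or_gt 0 x with h | h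
  · rw [abs_of_nonneg h]
  · rw [abs_of_neg h, Sh_neg]

lemma Sh_tendsto (c : ℝ) : Tendsto (Sh c) (𝓝[≠] (0:ℝ)) (𝓝 c) := by
  have hd : HasDerivAt (fun y : ℝ => Real.sinh (c * y)) c 0 := by
    simpa using HasDerivAt.sinh ((hasDerivAt_id (0:ℝ)).const_mul c)
  have h := hasDerivAt_iff_tendsto_slope.mp hd
  refine Tendsto.congr' ?_ h
  filter_upwards [self_mem_nhdsWithin] with y hy
  have hy0 : y ≠ 0 := hy
  simp [slope_def_field, Sh_of_ne c hy0]

lemma Sh_continuousOn (c : ℝ) : ContinuousOn (Sh c) (Ici 0) := by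
  intro x hx
  rcases eq_or_lt_of_le (Set.mem_Ici.mp hx : (0:ℝ) ≤ x) with rfl | hx'
  · have h1 : 𝓝[Ici (0:ℝ)] 0 = pure 0 ⊔ 𝓝[Ioi 0] 0 := by
      rw [← Set.Ioi_insert, nhdsWithin_insert]
    rw [ContinuousWithinAt, Sh_zero, h1, tendsto_sup]
    constructor
    · simpa [Sh_zero] using tendsto_pure_nhds (Sh c) 0
    · exact (Sh_tendsto c).mono_left
        (nhdsWithin_mono 0 (fun y hy => (ne_of_gt hy : y ≠ 0)))
  · apply ContinuousAt.continuousWithinAt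
    have heq : (fun y => Real.sinh (c * y) / y) =ᶠ[𝓝 x] Sh c := by
      filter_upwards [eventually_ne_nhds hx'.ne'] with y hy
      exact (Sh_of_ne c hy).symm
    exact ContinuousAt.congr
      (((Real.continuous_sinh.comp (continuous_const.mul continuous_id)).continuousAt).div
        continuousAt_id hx'.ne') heq

lemma psi_strictConvexOn {c : ℝ} (hc : 0 < c) :
    StrictConvexOn ℝ (Ici 0) (fun x => Real.log (Sh c x)) := by
  have hcont : ContinuousOn (fun x => Real.log (Sh c x)) (Ici 0) :=
    (Sh_continuousOn c).log (fun x _ => (Sh_pos hc x).ne')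
  have hder : ∀ x ∈ Ioi (0:ℝ), HasDerivAt (fun y => Real.log (Sh c y))
      (Real.cosh (c*x) * c / Real.sinh (c*x) - x⁻¹) x := by
    intro x hx
    have hx0 : x ≠ 0 := ne_of_gt hx
    have hsx : Real.sinh (c*x) ≠ 0 :=
      Real.sinh_ne_zero.mpr (mul_ne_zero hc.ne' hx0)
    have h1 : HasDerivAt (fun y : ℝ => Real.sinh (c*y)) (Real.cosh (c*x) * c) x := by
      simpa using HasDerivAt.sinh ((hasDerivAt_id x).const_mul c)
    have h2 : HasDerivAt (fun y : ℝ => Real.log (Real.sinh (c*y)) - Real.log y)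
        (Real.cosh (c*x) * c / Real.sinh (c*x) - x⁻¹) x :=
      (h1.log hsx).sub (Real.hasDerivAt_log hx0)
    apply h2.congr_of_eventuallyEq
    filter_upwards [Ioi_mem_nhds hx] with y hy
    have hy0 : (0:ℝ) < y := hy
    have hsy : Real.sinh (c*y) ≠ 0 :=
      Real.sinh_ne_zero.mpr (mul_ne_zero hc.ne' hy0.ne')
    rw [Sh_of_ne c hy0.ne', Real.log_div hsy hy0.ne']
  set g1 : ℝ → ℝ := fun x => Real.cosh (c*x) * c / Real.sinh (c*x) - x⁻¹ with hg1
  have hg1d : ∀ x ∈ Ioi (0:ℝ), HasDerivAt g1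
      ((Real.sinh (c*x)^2 - c^2*x^2) / (x^2 * Real.sinh (c*x)^2)) x := by
    intro x hx
    have hx0 : x ≠ 0 := ne_of_gt hx
    have hsx : Real.sinh (c*x) ≠ 0 :=
      Real.sinh_ne_zero.mpr (mul_ne_zero hc.ne' hx0)
    have hu : HasDerivAt (fun y : ℝ => Real.cosh (c*y) * c) (Real.sinh (c*x) * c * c) x := by
      simpa using (HasDerivAt.cosh ((hasDerivAt_id x).const_mul c)).mul_const c
    have hv : HasDerivAt (fun y : ℝ => Real.sinh (c*y)) (Real.cosh (c*x) * c) x := by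
      simpa using HasDerivAt.sinh ((hasDerivAt_id x).const_mul c)
    have hA := hu.div hv hsx
    have hinv := hasDerivAt_inv hx0
    have h := hA.sub hinv
    refine h.congr_deriv ?_
    have hcs : Real.cosh (c*x) * c * (Real.cosh (c*x) * c) = (Real.sinh (c*x)^2 + 1) * c^2 := by
      have := Real.cosh_sq (c*x)
      nlinarith [this]
    rw [hcs]
    field_simp
    ring
  have hmono : StrictMonoOn g1 (Ioi 0) := by
    apply strictMonoOn_of_hasDerivWithinAt_pos (convex_Ioi 0)
      (fun x hx => ((hg1d x hx).continuousAt).continuousWithinAt)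
      (fun x hx => by
        rw [interior_Ioi] at hx
        exact (hg1d x hx).hasDerivWithinAt)
    intro x hx
    rw [interior_Ioi] at hx
    have hx0 : (0:ℝ) < x := hx
    have hcx : (0:ℝ) < c * x := mul_pos hc hx0
    have hS : c * x < Real.sinh (c*x) := Real.self_lt_sinh_iff.mpr hcx
    have hSpos : (0:ℝ) < Real.sinh (c*x) := lt_trans hcx hS
    apply div_pos
    · nlinarith
    · positivity
  refine StrictMonoOn.strictConvexOn_of_deriv (convex_Ici 0) hcont ?_
  rw [interior_Ici]
  intro a ha b hb hab
  rw [(hder a ha).deriv, (hder b hb).deriv]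
  exact hmono ha hb hab

lemma psi_lt {c : ℝ} (hc : 0 < c) {x y : ℝ} (hx : 0 ≤ x) (hxy : x < y) :
    Real.log (Sh c x) < Real.log (Sh c y) := by
  have hy : 0 < y := lt_of_le_of_lt hx hxy
  have h0y : Real.log (Sh c 0) < Real.log (Sh c y) := by
    rw [Sh_zero, Sh_of_ne c hy.ne']
    apply Real.log_lt_log hc
    rw [lt_div_iff₀ hy]
    exact Real.self_lt_sinh_iff.mpr (mul_pos hc hy)
  rcases eq_or_lt_of_le hx with rfl | hx'
  · exact h0y
  · have hcvx := psi_strictConvexOn hc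
    have ha : 0 < 1 - x/y := by
      have : x/y < 1 := (div_lt_one hy).mpr hxy
      linarith
    have hb : 0 < x/y := div_pos hx' hy
    have h := hcvx.2 (self_mem_Ici) (mem_Ici.mpr hy.le) hy.ne ha hb (by ring)
    simp only [smul_eq_mul, mul_zero, zero_add] at h
    rw [div_mul_cancel₀ x hy.ne'] at h
    nlinarith [mul_lt_mul_of_pos_left h0y ha]

lemma key_combo {c : ℝ} (hc : 0 < c) {x y a b : ℝ} (hxy : x ≠ y) (ha : 0 < a) (hb : 0 < b)
    (hab : a + b = 1) :
    Real.log (Sh c (a*x + b*y)) < a * Real.log (Sh c x) + b * Real.log (Sh c y) := by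
  have habs : |a*x + b*y| ≤ a*|x| + b*|y| := by
    calc |a*x + b*y| ≤ |a*x| + |b*y| := abs_add_le _ _
    _ = a*|x| + b*|y| := by rw [abs_mul, abs_mul, abs_of_pos ha, abs_of_pos hb]
  rcases eq_or_ne |x| |y| with he | hne
  · have hyx : y = -x := by
      rcases abs_eq_abs.mp he with h | h
      · exact absurd h hxy
      · linarith [h]
    have hx0 : x ≠ 0 := by
      rintro rfl
      have hy0 : y = 0 := by simpa using hyx
      exact hxy hy0.symm
    have h1 : |a*x + b*y| < |x| := by
      rw [hyx, show a*x + b*(-x) = (a-b)*x from by ring, abs_mul]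
      calc |a-b| * |x| < 1 * |x| := by
            apply mul_lt_mul_of_pos_right _ (abs_pos.mpr hx0)
            rw [abs_lt]; constructor <;> linarith
      _ = |x| := one_mul _
    have h2 : Real.log (Sh c (a*x + b*y)) < Real.log (Sh c x) := by
      rw [← Sh_abs c (a*x + b*y), ← Sh_abs c x]
      exact psi_lt hc (abs_nonneg _) h1
    have h3 : Sh c y = Sh c x := by rw [hyx, Sh_neg]
    rw [h3]
    have h4 : a * Real.log (Sh c x) + b * Real.log (Sh c x) = Real.log (Sh c x) := by
      rw [← add_mul, hab, one_mul]
    rw [h4]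
    exact h2
  · have hcvx := psi_strictConvexOn hc
    have h := hcvx.2 (mem_Ici.mpr (abs_nonneg x)) (mem_Ici.mpr (abs_nonneg y)) hne ha hb hab
    simp only [smul_eq_mul] at h
    have h4 : Real.log (Sh c |a*x+b*y|) ≤ Real.log (Sh c (a*|x| + b*|y|)) := by
      rcases eq_or_lt_of_le habs with heq | hlt
      · rw [heq]
      · exact le_of_lt (psi_lt hc (abs_nonneg _) hlt)
    calc Real.log (Sh c (a*x + b*y)) = Real.log (Sh c |a*x+b*y|) := by rw [Sh_abs]
    _ ≤ Real.log (Sh c (a*|x| + b*|y|)) := h4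
    _ < a * Real.log (Sh c |x|) + b * Real.log (Sh c |y|) := h
    _ = a * Real.log (Sh c x) + b * Real.log (Sh c y) := by rw [Sh_abs, Sh_abs]

lemma four_point {c : ℝ} (hc : 0 < c) {p p' q q' : ℝ} (h1 : p < p') (h2 : p' < q)
    (hsum : p + q = p' + q') :
    Sh c p' * Sh c q' < Sh c p * Sh c q := by
  set lam := (q - p') / (q - p) with hlam
  have hqp : 0 < q - p := by linarith
  have hl0 : 0 < lam := div_pos (by linarith) hqp
  have hl1 : 0 < 1 - lam := by
    have : lam < 1 := (div_lt_one hqp).mpr (by linarith)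
    linarith
  have hp' : p' = lam * p + (1 - lam) * q := by
    rw [hlam]
    field_simp
    ring
  have hq' : q' = (1 - lam) * p + lam * q := by
    rw [show q' = p + q - p' from by linarith, hp']
    ring
  have hpq : p ≠ q := by linarith
  have k1 := key_combo hc hpq hl0 hl1 (by ring)
  have k2 := key_combo hc hpq hl1 hl0 (by ring)
  rw [← hp'] at k1
  rw [← hq'] at k2
  have hsumlog : Real.log (Sh c p') + Real.log (Sh c q') <
      Real.log (Sh c p) + Real.log (Sh c q) := by
    ring_nf at k1 k2 ⊢
    linarith
  have h5 : Real.log (Sh c p' * Sh c q') < Real.log (Sh c p * Sh c q) := by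
    rw [Real.log_mul (Sh_pos hc p').ne' (Sh_pos hc q').ne',
      Real.log_mul (Sh_pos hc p).ne' (Sh_pos hc q).ne']
    exact hsumlog
  exact (Real.log_lt_log_iff (mul_pos (Sh_pos hc p') (Sh_pos hc q'))
    (mul_pos (Sh_pos hc p) (Sh_pos hc q))).mp h5

lemma theta_eq {m s t : ℝ} (hm : 0 < m) (ht : 0 < t) (hts : t < s) :
    theta m s t = Real.exp ((Real.log s + Real.log t)/2) *
      (Sh ((Real.log s - Real.log t)/2) m / Sh ((Real.log s - Real.log t)/2) (m-1)) := by
  have hs : 0 < s := lt_trans ht hts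
  have hstne : s ≠ t := hts.ne'
  have hlog : Real.log t < Real.log s := Real.log_lt_log ht hts
  have hc : 0 < (Real.log s - Real.log t)/2 := by linarith
  have hne2 : Real.log s - Real.log t ≠ 0 := ne_of_gt (by linarith)
  have key : ∀ a : ℝ, s ^ a - t ^ a =
      2 * Real.exp ((Real.log s + Real.log t)/2 * a) *
        Real.sinh ((Real.log s - Real.log t)/2 * a) := by
    intro a
    rw [Real.rpow_def_of_pos hs, Real.rpow_def_of_pos ht,
      show Real.log s * a
          = (Real.log s + Real.log t)/2*a + (Real.log s - Real.log t)/2*a from by ring,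
      show Real.log t * a
          = (Real.log s + Real.log t)/2*a - (Real.log s - Real.log t)/2*a from by ring,
      Real.exp_add, Real.exp_sub, Real.sinh_eq, Real.exp_neg]
    have h := Real.exp_ne_zero ((Real.log s - Real.log t)/2*a)
    field_simp
  have h0 : ¬(s = 0 ∨ t = 0) := by push_neg; exact ⟨hs.ne', ht.ne'⟩
  simp only [theta]
  rw [if_neg hstne, if_neg h0]
  by_cases hm1 : m = 1
  · rw [if_pos hm1, hm1]
    have h1 : s - t = 2 * Real.exp ((Real.log s + Real.log t)/2) *
        Real.sinh ((Real.log s - Real.log t)/2) := by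
      have := key 1
      simpa using this
    rw [h1, show (1:ℝ) - 1 = 0 from by norm_num, Sh_zero,
      Sh_of_ne _ one_ne_zero, mul_one, div_one]
    field_simp
  · rw [if_neg hm1]
    have hm1' : m - 1 ≠ 0 := sub_ne_zero.mpr hm1
    have hsm : Real.sinh ((Real.log s - Real.log t)/2*(m-1)) ≠ 0 :=
      Real.sinh_ne_zero.mpr (mul_ne_zero hc.ne' hm1')
    rw [key m, key (m-1), Sh_of_ne _ hm.ne', Sh_of_ne _ hm1']
    have eE : Real.exp ((Real.log s + Real.log t)/2 * m)
        = Real.exp ((Real.log s + Real.log t)/2 * (m-1)) *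
          Real.exp ((Real.log s + Real.log t)/2) := by
      rw [← Real.exp_add]
      congr 1
      ring
    rw [eE]
    have he1 := Real.exp_ne_zero ((Real.log s + Real.log t)/2 * (m-1))
    have he2 := Real.exp_ne_zero ((Real.log s + Real.log t)/2)
    field_simp

lemma theta_symm {m s t : ℝ} (hs : 0 < s) (ht : 0 < t) : theta m s t = theta m t s := by
  rcases eq_or_ne s t with rfl | hne
  · rfl
  · have h0 : ¬(s = 0 ∨ t = 0) := by push_neg; exact ⟨hs.ne', ht.ne'⟩
    have h0' : ¬(t = 0 ∨ s = 0) := by push_neg; exact ⟨ht.ne', hs.ne'⟩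
    simp only [theta, if_neg hne, if_neg (Ne.symm hne), if_neg h0, if_neg h0']
    by_cases hm1 : m = 1
    · rw [if_pos hm1, if_pos hm1,
        show s - t = -(t - s) from by ring,
        show Real.log s - Real.log t = -(Real.log t - Real.log s) from by ring,
        neg_div_neg_eq]
    · rw [if_neg hm1, if_neg hm1,
        show s^m - t^m = -(t^m - s^m) from by ring,
        show s^(m-1) - t^(m-1) = -(t^(m-1) - s^(m-1)) from by ring,
        mul_neg, neg_div_neg_eq]

lemma main_aux {m₁ m₂ s t : ℝ} (hm₁ : 0 < m₁) (h12 : m₁ < m₂) (ht : 0 < t) (hts : t < s) :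
    theta m₁ s t < theta m₂ s t := by
  have hlog : Real.log t < Real.log s := Real.log_lt_log ht hts
  have hc : 0 < (Real.log s - Real.log t)/2 := by linarith
  rw [theta_eq hm₁ ht hts, theta_eq (lt_trans hm₁ h12) ht hts]
  apply mul_lt_mul_of_pos_left _ (Real.exp_pos _)
  rw [div_lt_div_iff₀ (Sh_pos hc _) (Sh_pos hc _)]
  have h := four_point hc (p := m₁ - 1) (p' := m₁) (q := m₂) (q' := m₂ - 1)
    (by linarith) h12 (by ring)
  calc Sh _ m₁ * Sh _ (m₂ - 1) < Sh _ (m₁ - 1) * Sh _ m₂ := h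
  _ = Sh _ m₂ * Sh _ (m₁ - 1) := mul_comm _ _

end ThetaAux

/-- Strict monotonicity in `m` of the `m`-mean. -/
theorem theta_strictMono_in_m (m₁ m₂ s t : ℝ) (hm₁ : 0 < m₁) (h12 : m₁ < m₂) (hm₂ : m₂ ≤ 2)
    (hs : 0 < s) (ht : 0 < t) (hst : s ≠ t) :
    theta m₁ s t < theta m₂ s t := by
  rcases lt_or_gt_of_ne hst with h | h
  · rw [ThetaAux.theta_symm hs ht (m := m₁), ThetaAux.theta_symm hs ht (m := m₂)]
    exact ThetaAux.main_aux hm₁ h12 hs h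
  · exact ThetaAux.main_aux hm₁ h12 ht h
end
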